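/- For any commutative ring R and n ≥ 1, the diagram W_{n+1}(R) → W_n(W_1(R)) ⇉ W_{n−1}(W_1(R)) is an equaliser: the comonad comultiplication map Δ: W_{n+1}(R) → W_n(W_1(R)) is injective, and its image is exactly the equaliser of the truncation map τ: W_n(W_1(R)) → W_{n−1}(W_1(R)) and the map Δ ∘ W_n(τ): W_n(W_1(R)) → W_{n−1}(W_1(R)). -/
import Mathlib


/-- The comonad comultiplication `Δ : W_{n+1}(R) → W_n(W_1(R))` in Buium–Joyal coordinates:
`(x₀, …, x_{n+1}) ↦ ((x₀,x₁), (x₁,x₂), …, (x_n,x_{n+1}))`. -/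
def wittComult (R : Type*) (n : ℕ) : (Fin (n + 2) → R) → Fin (n + 1) → Fin 2 → R :=
  fun x i j => x ⟨(i : ℕ) + (j : ℕ), by have := i.2; have := j.2; omega⟩

/-- The comultiplication `Δ : W_n(R) → W_{n-1}(W_1(R))` in Buium–Joyal coordinates. -/
def wittComult' (R : Type*) (n : ℕ) : (Fin (n + 1) → R) → Fin n → Fin 2 → R :=
  fun x i j => x ⟨(i : ℕ) + (j : ℕ), by have := i.2; have := j.2; omega⟩

/-- The truncation `τ : W_n(W_1(R)) → W_{n-1}(W_1(R))` in Buium–Joyal coordinates. -/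
def wittTrunc (R : Type*) (n : ℕ) : (Fin (n + 1) → Fin 2 → R) → Fin n → Fin 2 → R :=
  fun z i => z ⟨(i : ℕ), by have := i.2; omega⟩

/-- The map `W_n(τ) : W_n(W_1(R)) → W_n(W_0(R)) = W_n(R)` in Buium–Joyal coordinates. -/
def wittMapTrunc (R : Type*) (n : ℕ) : (Fin (n + 1) → Fin 2 → R) → Fin (n + 1) → R :=
  fun z i => z i 0

/-- Lemma 2.5.2: for `n ≥ 1`, the diagram
`W_{n+1}(R) → W_n(W_1(R)) ⇉ W_{n-1}(W_1(R))` is an equaliser, where the first map is `Δ`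
and the parallel pair is `τ` and `Δ ∘ W_n(τ)`. -/
theorem wittComult_equalizer (R : Type*) [CommRing R] (n : ℕ) (hn : 1 ≤ n) :
    Function.Injective (wittComult R n) ∧
      ∀ z : Fin (n + 1) → Fin 2 → R,
        (wittTrunc R n z = wittComult' R n (wittMapTrunc R n z) ↔
          ∃ x : Fin (n + 2) → R, wittComult R n x = z) := by
  constructor
  · intro x y h
    funext k
    rcases k with ⟨k, hk⟩
    by_cases hkn : k ≤ n
    · have := congrFun (congrFun h ⟨k, by omega⟩) ⟨0, by omega⟩
      simpa [wittComult] using this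
    · have hkeq : k = n + 1 := by omega
      have := congrFun (congrFun h ⟨n, by omega⟩) ⟨1, by omega⟩
      simpa [wittComult, hkeq] using this
  · intro z
    constructor
    · intro h
      refine ⟨fun k => if hk : (k : ℕ) ≤ n then z ⟨k, by omega⟩ 0 else z ⟨n, by omega⟩ 1, ?_⟩
      funext i j
      rcases i with ⟨i, hi⟩
      rcases j with ⟨j, hj⟩
      simp only [wittComult]
      interval_cases j
      · simp only [dif_pos (by omega : i + 0 ≤ n)]
        congr 1
      · by_cases hin : i + 1 ≤ n
        · simp only [dif_pos hin]
          have := congrFun (congrFun h ⟨i, by omega⟩) ⟨1, by omega⟩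
          simp only [wittTrunc, wittComult', wittMapTrunc] at this
          rw [this]
        · have hieq : i = n := by omega
          simp only [dif_neg hin]
          subst hieq
          rfl
    · rintro ⟨x, rfl⟩
      funext i j
      rcases i with ⟨i, hi⟩
      rcases j with ⟨j, hj⟩
      simp only [wittTrunc, wittComult, wittComult', wittMapTrunc]
      congr 1
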